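/- For all natural numbers j ≥ 1 and k ≥ 0, the series ∑_{r=1}^∞ arctan( F_{4j} / F_{4jr+2k−1} ) converges and its sum equals arctan( L_{2j} / L_{2j+2k−1} ). -/

import Mathlib

def lucas : ℕ → ℕ
  | 0 => 2
  | 1 => 1
  | n + 2 => lucas (n + 1) + lucas n

open Real Filter Topology goldenRatio

lemma lucas_pos : ∀ n, 0 < lucas n
  | 0 => by norm_num [lucas]
  | 1 => by norm_num [lucas]
  | n + 2 => by
    have := lucas_pos (n + 1); have := lucas_pos n
    simp only [lucas]; omega

lemma lucas_ge : ∀ n, n ≤ lucas n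
  | 0 => by norm_num [lucas]
  | 1 => by norm_num [lucas]
  | n + 2 => by
    have := lucas_ge (n + 1); have := lucas_pos n
    simp only [lucas]; omega

lemma sqrt5_sq : (Real.sqrt 5) ^ 2 = 5 := Real.sq_sqrt (by norm_num)

lemma coe_lucas : ∀ n, (lucas n : ℝ) = φ ^ n + ψ ^ n
  | 0 => by norm_num [lucas]
  | 1 => by norm_num [lucas]
  | n + 2 => by
    have h1 := coe_lucas (n + 1)
    have h2 := coe_lucas n
    have h3 : (lucas (n + 2) : ℝ) = (lucas (n + 1) : ℝ) + (lucas n : ℝ) := by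
      simp only [lucas]; push_cast; ring
    rw [h3, h1, h2]
    linear_combination (-(φ ^ n + ψ ^ n) / 4) * sqrt5_sq

lemma five_fib_mul (m n : ℕ) :
    5 * (Nat.fib m : ℝ) * (Nat.fib n : ℝ) = (φ ^ m - ψ ^ m) * (φ ^ n - ψ ^ n) := by
  have h5 : Real.sqrt 5 * Real.sqrt 5 = 5 := Real.mul_self_sqrt (by norm_num)
  rw [Real.coe_fib_eq, Real.coe_fib_eq, mul_assoc, div_mul_div_comm, h5]
  ring

lemma lucas_fib : ∀ n, lucas n + Nat.fib n = 2 * Nat.fib (n + 1)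
  | 0 => by norm_num [lucas]
  | 1 => by norm_num [lucas]
  | n + 2 => by
    have h1 := lucas_fib (n + 1)
    have h2 := lucas_fib n
    have e1 : Nat.fib (n + 2) = Nat.fib n + Nat.fib (n + 1) := Nat.fib_add_two
    have e2 : Nat.fib (n + 1 + 2) = Nat.fib (n + 1) + Nat.fib (n + 1 + 1) := Nat.fib_add_two
    have e3 : Nat.fib (n + 1 + 1) = Nat.fib (n + 2) := rfl
    have e4 : Nat.fib (n + 1 + 2) = Nat.fib (n + 2 + 1) := rfl
    simp only [lucas]; omega

lemma fib_four_mul (j : ℕ) : Nat.fib (4 * j) = Nat.fib (2 * j) * lucas (2 * j) := by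
  rw [show 4 * j = 2 * (2 * j) by ring, Nat.fib_two_mul]
  congr 1
  have h1 := lucas_fib (2 * j)
  have h2 := Nat.fib_le_fib_succ (n := 2 * j)
  omega

lemma hUV (j : ℕ) : φ ^ (2 * j) * ψ ^ (2 * j) = 1 := by
  rw [← mul_pow, goldenRatio_mul_goldenConj]
  simp [pow_mul]

lemma hXY (a : ℕ) (ha : Odd a) : φ ^ a * ψ ^ a = -1 := by
  rw [← mul_pow, goldenRatio_mul_goldenConj, ha.neg_one_pow]

lemma lucasA (j a : ℕ) :
    (lucas (a + 4 * j) : ℝ) = (lucas a : ℝ) + 5 * (Nat.fib (a + 2 * j) : ℝ) * (Nat.fib (2 * j) : ℝ) := by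
  rw [five_fib_mul, coe_lucas, coe_lucas, show a + 4 * j = a + 2 * j + 2 * j by ring]
  linear_combination (φ ^ a + ψ ^ a) * hUV j

lemma lucasB (j a : ℕ) (ha : Odd a) :
    (lucas a : ℝ) * (lucas (a + 4 * j) : ℝ) + (lucas (2 * j) : ℝ) ^ 2
      = 5 * (Nat.fib (a + 2 * j) : ℝ) * (Nat.fib (a + 2 * j) : ℝ) := by
  rw [five_fib_mul, coe_lucas, coe_lucas, coe_lucas, show a + 4 * j = a + 2 * j + 2 * j by ring]
  linear_combination (φ ^ (2 * j) + ψ ^ (2 * j)) ^ 2 * hXY a ha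

lemma step (j a : ℕ) (ha : Odd a) :
    Real.arctan ((Nat.fib (4 * j) : ℝ) / (Nat.fib (a + 2 * j) : ℝ))
      = Real.arctan ((lucas (2 * j) : ℝ) / (lucas a : ℝ))
        - Real.arctan ((lucas (2 * j) : ℝ) / (lucas (a + 4 * j) : ℝ)) := by
  have hLa : (0 : ℝ) < (lucas a : ℝ) := by exact_mod_cast lucas_pos a
  have hLb : (0 : ℝ) < (lucas (a + 4 * j) : ℝ) := by exact_mod_cast lucas_pos _
  have hL2 : (0 : ℝ) < (lucas (2 * j) : ℝ) := by exact_mod_cast lucas_pos _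
  have hFm : (0 : ℝ) < (Nat.fib (a + 2 * j) : ℝ) := by
    have : 0 < Nat.fib (a + 2 * j) := Nat.fib_pos.mpr (by rcases ha with ⟨c, hc⟩; omega)
    exact_mod_cast this
  set x := (lucas (2 * j) : ℝ) / (lucas a : ℝ) with hxdef
  set y := (lucas (2 * j) : ℝ) / (lucas (a + 4 * j) : ℝ) with hydef
  have hx : 0 < x := by positivity
  have hy : 0 < y := by positivity
  have hcond : x * (-y) < 1 := by nlinarith
  rw [sub_eq_add_neg, ← Real.arctan_neg, Real.arctan_add hcond]
  congr 1
  have hd : (0 : ℝ) < 1 - x * (-y) := by nlinarith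
  have hA := lucasA j a
  have hB := lucasB j a ha
  have hC : (Nat.fib (4 * j) : ℝ) = (Nat.fib (2 * j) : ℝ) * (lucas (2 * j) : ℝ) := by
    exact_mod_cast congrArg (Nat.cast : ℕ → ℝ) (fib_four_mul j)
  rw [hxdef, hydef]
  field_simp
  rw [eq_div_iff (show (lucas a : ℝ) * (lucas (a + 4 * j) : ℝ) - -(lucas (2 * j) : ℝ) ^ 2 ≠ 0 from
    ne_of_gt (by nlinarith [mul_pos hLa hLb, sq_nonneg (lucas (2 * j) : ℝ)]))]
  linear_combination ((lucas a : ℝ) * (lucas (a + 4 * j) : ℝ)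
      + (lucas (2 * j) : ℝ) * (lucas (2 * j) : ℝ)) * hC
    + ((Nat.fib (2 * j) : ℝ) * (lucas (2 * j) : ℝ)) * hB
    + (-((lucas (2 * j) : ℝ) * (Nat.fib (a + 2 * j) : ℝ))) * hA

theorem stmt18 (j k : ℕ) (hj : 1 ≤ j) :
    HasSum (fun r : ℕ =>
        Real.arctan ((Nat.fib (4 * j) : ℝ) /
          (Nat.fib (4 * j * (1 + r) + 2 * k - 1) : ℝ)))
      (Real.arctan ((lucas (2 * j) : ℝ) / (lucas (2 * j + 2 * k - 1) : ℝ))) := by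
  obtain ⟨t, ht⟩ : ∃ t, 2 * j + 2 * k = t + 1 := ⟨2 * j + 2 * k - 1, by omega⟩
  set f : ℕ → ℝ := fun r =>
    Real.arctan ((Nat.fib (4 * j) : ℝ) / (Nat.fib (4 * j * (1 + r) + 2 * k - 1) : ℝ)) with hf
  set g : ℕ → ℝ := fun n =>
    Real.arctan ((lucas (2 * j) : ℝ) / (lucas (4 * j * n + t) : ℝ)) with hg
  have hterm : ∀ r : ℕ, f r = g r - g (r + 1) := by
    intro r
    have hodd : Odd (4 * j * r + t) := by
      obtain ⟨c, hc⟩ : Odd t := ⟨j + k - 1, by omega⟩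
      exact ⟨2 * j * r + c, by rw [hc]; ring⟩
    have hidx : 4 * j * (1 + r) + 2 * k - 1 = (4 * j * r + t) + 2 * j := by
      have e : 4 * j * (1 + r) = 4 * j * r + 4 * j := by ring
      omega
    have hidx2 : 4 * j * (r + 1) + t = (4 * j * r + t) + 4 * j := by ring
    simp only [hf, hg, hidx, hidx2]
    exact step j (4 * j * r + t) hodd
  have hnonneg : ∀ r, 0 ≤ f r := by
    intro r
    have : Real.arctan 0 ≤ f r := by
      apply Real.arctan_strictMono.monotone
      positivity
    simpa [Real.arctan_zero] using this
  have htv : (lucas (2 * j + 2 * k - 1) : ℝ) = (lucas (4 * j * 0 + t) : ℝ) := by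
    have e : 2 * j + 2 * k - 1 = 4 * j * 0 + t := by
      have e0 : 4 * j * 0 = 0 := Nat.mul_zero _
      omega
    rw [e]
  rw [show Real.arctan ((lucas (2 * j) : ℝ) / (lucas (2 * j + 2 * k - 1) : ℝ)) = g 0 by
    simp only [hg]; rw [htv]]
  rw [hasSum_iff_tendsto_nat_of_nonneg hnonneg]
  have hps : ∀ n, ∑ i ∈ Finset.range n, f i = g 0 - g n := by
    intro n
    rw [Finset.sum_congr rfl fun i _ => hterm i]
    exact Finset.sum_range_sub' g n
  have h1 : Tendsto (fun n : ℕ => ((lucas (4 * j * n + t) : ℝ))) atTop atTop := by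
    apply tendsto_atTop_mono (fun n => ?_) tendsto_natCast_atTop_atTop
    have h2 : n ≤ 4 * j * n + t := le_trans (Nat.le_mul_of_pos_left n (by omega)) (Nat.le_add_right _ _)
    exact_mod_cast le_trans h2 (lucas_ge _)
  have h2 : Tendsto (fun n : ℕ => (lucas (2 * j) : ℝ) / (lucas (4 * j * n + t) : ℝ))
      atTop (nhds 0) := Tendsto.div_atTop tendsto_const_nhds h1
  have h3 : Tendsto g atTop (nhds 0) := by
    have := (Real.continuous_arctan.tendsto 0).comp h2
    simpa [hg, Real.arctan_zero, Function.comp_def] using this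
  have hlim : Tendsto (fun n => g 0 - g n) atTop (nhds (g 0)) := by
    simpa using tendsto_const_nhds.sub h3
  exact hlim.congr fun n => (hps n).symm
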